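/- Let S be a finite nonempty set, let A be a finite nonempty set, let r : S × A → ℝ, γ ∈ [0,1), and let p : S × A → Δ(S). Let (β_k) satisfy β_k ∈ [0,1], β_k → 0, Σ_k β_k = ∞, and let (v̂_k : S → ℝ)_{k≥0} be a sequence of functions converging pointwise to v : S → ℝ. Then the sequence of functions Q̂_k : S × A → ℝ defined by any initial Q̂_0 and Q̂_{k+1}(s,a) = (1 − β_k) Q̂_k(s,a) + β_k ( r(s,a) + γ Σ_{s'∈S} p(s'|s,a) v̂_k(s') ) converges pointwise to Q(s,a) := r(s,a) + γ Σ_{s'∈S} p(s'|s,a) v(s'). -/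

import Mathlib

open Filter

/-- Deterministic Robbins–Monro style lemma: if `x (k+1) = (1-β k) x k + β k * c k`
with `β k ∈ [0,1]`, `∑ β = ∞`, and `c k → L`, then `x k → L`. -/
lemma robbins_monro (β : ℕ → ℝ) (hβ01 : ∀ k, β k ∈ Set.Icc (0 : ℝ) 1)
    (hβsum : Tendsto (fun n => ∑ k ∈ Finset.range n, β k) atTop atTop)
    (c : ℕ → ℝ) (L : ℝ) (hc : Tendsto c atTop (nhds L))
    (x : ℕ → ℝ) (hx : ∀ k, x (k + 1) = (1 - β k) * x k + β k * c k) :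
    Tendsto x atTop (nhds L) := by
  rw [Metric.tendsto_atTop]
  intro ε hε
  -- pick N such that |c k - L| ≤ ε/2 for k ≥ N
  obtain ⟨N, hN⟩ := (Metric.tendsto_atTop.mp hc (ε / 2) (by linarith)).imp
    (fun N h k hk => (h k hk).le)
  set e : ℕ → ℝ := fun k => |x k - L| with he
  have key : ∀ k, e (k + 1) ≤ (1 - β k) * e k + β k * |c k - L| := by
    intro k
    have h1 : x (k + 1) - L = (1 - β k) * (x k - L) + β k * (c k - L) := by
      rw [hx k]; ring
    calc e (k + 1) = |(1 - β k) * (x k - L) + β k * (c k - L)| := by rw [he]; simp [h1]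
      _ ≤ |(1 - β k) * (x k - L)| + |β k * (c k - L)| := abs_add_le _ _
      _ ≤ (1 - β k) * e k + β k * |c k - L| := by
          rw [abs_mul, abs_mul, abs_of_nonneg (by linarith [(hβ01 k).2]),
            abs_of_nonneg (hβ01 k).1]
  set D : ℝ := max (e N - ε / 2) 0 with hD
  have hD0 : 0 ≤ D := le_max_right _ _
  set P : ℕ → ℝ := fun m => ∏ j ∈ Finset.range m, (1 - β (N + j)) with hP
  have hPnn : ∀ m, 0 ≤ P m := fun m =>
    Finset.prod_nonneg fun j _ => by linarith [(hβ01 (N + j)).2]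
  have main : ∀ m, e (N + m) - ε / 2 ≤ P m * D := by
    intro m
    induction m with
    | zero =>
        simp only [Nat.add_zero, hP, Finset.prod_range_zero, one_mul]
        exact le_max_left _ _
    | succ m ih =>
        have hcb : |c (N + m) - L| ≤ ε / 2 := hN _ (Nat.le_add_right _ _)
        have hb1 : 0 ≤ 1 - β (N + m) := by linarith [(hβ01 (N + m)).2]
        have step : e (N + (m + 1)) - ε / 2 ≤ (1 - β (N + m)) * (e (N + m) - ε / 2) := by
          have := key (N + m)
          have h2 : β (N + m) * |c (N + m) - L| ≤ β (N + m) * (ε / 2) :=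
            mul_le_mul_of_nonneg_left hcb (hβ01 (N + m)).1
          have : e (N + m + 1) ≤ (1 - β (N + m)) * e (N + m) + β (N + m) * (ε / 2) := by
            linarith
          have h3 : N + (m + 1) = N + m + 1 := by ring
          rw [h3]; linarith
        calc e (N + (m + 1)) - ε / 2 ≤ (1 - β (N + m)) * (e (N + m) - ε / 2) := step
          _ ≤ (1 - β (N + m)) * (P m * D) := mul_le_mul_of_nonneg_left ih hb1
          _ = P (m + 1) * D := by simp only [hP, Finset.prod_range_succ]; ring
  -- P m → 0
  have hPle : ∀ m, P m ≤ Real.exp (-(∑ j ∈ Finset.range m, β (N + j))) := by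
    intro m
    calc P m ≤ ∏ j ∈ Finset.range m, Real.exp (-β (N + j)) :=
          Finset.prod_le_prod (fun j _ => by linarith [(hβ01 (N + j)).2])
            (fun j _ => by linarith [Real.add_one_le_exp (-β (N + j))])
      _ = Real.exp (∑ j ∈ Finset.range m, -β (N + j)) := (Real.exp_sum _ _).symm
      _ = _ := by rw [Finset.sum_neg_distrib]
  have htail : Tendsto (fun m => ∑ j ∈ Finset.range m, β (N + j)) atTop atTop := by
    have heq : ∀ m, ∑ j ∈ Finset.range m, β (N + j)
        = (∑ k ∈ Finset.range (N + m), β k) - ∑ k ∈ Finset.range N, β k := by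
      intro m; rw [Finset.sum_range_add]; ring
    have h1 : Tendsto (fun m => ∑ k ∈ Finset.range (N + m), β k) atTop atTop := by
      have := hβsum.comp (tendsto_add_atTop_nat N)
      simpa [Function.comp_def, add_comm] using this
    simp only [heq, sub_eq_add_neg]
    exact h1.atTop_add tendsto_const_nhds
  have hexp : Tendsto (fun m => Real.exp (-(∑ j ∈ Finset.range m, β (N + j))))
      atTop (nhds 0) :=
    Real.tendsto_exp_atBot.comp (tendsto_neg_atTop_atBot.comp htail)
  have hP0 : Tendsto P atTop (nhds 0) :=
    squeeze_zero hPnn hPle hexp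
  have hPD : Tendsto (fun m => P m * D) atTop (nhds 0) := by
    simpa using hP0.mul_const D
  obtain ⟨M, hM⟩ := (Metric.tendsto_atTop.mp hPD (ε / 2) (by linarith))
  refine ⟨N + M, fun k hk => ?_⟩
  have hk' : k = N + (k - N) := by omega
  have hPDk : P (k - N) * D < ε / 2 := by
    have := hM (k - N) (by omega)
    rw [Real.dist_eq] at this
    calc P (k - N) * D ≤ |P (k - N) * D - 0| := by
          rw [sub_zero]; exact le_abs_self _
      _ < ε / 2 := this
  have := main (k - N)
  rw [← hk'] at this
  rw [Real.dist_eq]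
  calc |x k - L| = e k := rfl
    _ ≤ P (k - N) * D + ε / 2 := by linarith
    _ < ε := by linarith

/-- The model-based Q-update `Q̂_{k+1}(s,a) = (1-β_k) Q̂_k(s,a) +
β_k (r(s,a) + γ Σ_{s'} p(s'|s,a) v̂_k(s'))` with `β_k ∈ [0,1]`, `β_k → 0`, `Σ β_k = ∞`
and `v̂_k → v` pointwise converges pointwise to the Bellman target
`Q(s,a) = r(s,a) + γ Σ_{s'} p(s'|s,a) v(s')`. -/
theorem stmt10
    {S A : Type*} [Fintype S] [Nonempty S] [Fintype A] [Nonempty A]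
    (r : S → A → ℝ) (γ : ℝ) (hγ : 0 ≤ γ ∧ γ < 1)
    (p : S → A → S → ℝ)
    (hp0 : ∀ s a s', 0 ≤ p s a s') (hp1 : ∀ s a, ∑ s', p s a s' = 1)
    (β : ℕ → ℝ) (hβ01 : ∀ k, β k ∈ Set.Icc (0 : ℝ) 1)
    (hβ0 : Tendsto β atTop (nhds 0))
    (hβsum : Tendsto (fun n => ∑ k ∈ Finset.range n, β k) atTop atTop)
    (vh : ℕ → S → ℝ) (v : S → ℝ)
    (hv : ∀ s, Tendsto (fun k => vh k s) atTop (nhds (v s)))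
    (Qh : ℕ → S → A → ℝ)
    (hQ : ∀ k s a, Qh (k + 1) s a =
      (1 - β k) * Qh k s a + β k * (r s a + γ * ∑ s', p s a s' * vh k s')) :
    ∀ s a, Tendsto (fun k => Qh k s a) atTop
      (nhds (r s a + γ * ∑ s', p s a s' * v s')) := by
  intro s a
  have hc : Tendsto (fun k => r s a + γ * ∑ s', p s a s' * vh k s') atTop
      (nhds (r s a + γ * ∑ s', p s a s' * v s')) :=
    tendsto_const_nhds.add
      ((tendsto_finset_sum _ fun s' _ => (hv s').const_mul (p s a s')).const_mul γ)
  exact robbins_monro β hβ01 hβsum _ _ hc (fun k => Qh k s a) (fun k => hQ k s a)
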